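/- Let A be a unital ℂ-algebra with automorphism σ, let φ : A → ℂ be a linear functional satisfying the twisted trace property φ(xy) = φ(σ(y)x) for all x, y ∈ A, and let F ∈ A with F² = 1 and σ(F) = F. For n ∈ ℕ define the (n+1)-linear functional ch(x₀,…,xₙ) = φ(F[F,x₀][F,x₁]⋯[F,xₙ]). Then ch is twisted-cyclic: ch(x₀,…,xₙ) = (-1)^n ch(σ(xₙ), x₀, …, xₙ₋₁) for all x₀,…,xₙ ∈ A. -/

import Mathlib

/-- For a σ-twisted trace `φ` and a σ-invariant symmetry `F`
(`F² = 1`), the character `ch(x₀,…,xₙ) = φ(F[F,x₀]⋯[F,xₙ])` is twisted-cyclic: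
`ch(x₀,…,xₙ) = (-1)ⁿ ch(σ(xₙ), x₀, …, xₙ₋₁)`. -/
theorem stmt_7 {A : Type*} [Ring A] [Algebra ℂ A] (σ : A ≃ₐ[ℂ] A)
    (φ : A →ₗ[ℂ] ℂ) (hφ : ∀ x y : A, φ (x * y) = φ (σ y * x))
    (F : A) (hF : F * F = 1) (hσF : σ F = F)
    (n : ℕ) (x : Fin (n + 1) → A) :
    φ (F * (List.ofFn fun i : Fin (n + 1) => F * x i - x i * F).prod) =
      (-1 : ℂ) ^ n *
        φ (F * ((F * σ (x (Fin.last n)) - σ (x (Fin.last n)) * F) *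
          (List.ofFn fun i : Fin n => F * x i.castSucc - x i.castSucc * F).prod)) := by
  set c : A → A := fun a => F * a - a * F with hc
  -- anticommutation of F with each commutator
  have hac : ∀ a : A, F * c a = -(c a * F) := by
    intro a
    simp only [hc, mul_sub, sub_mul, ← mul_assoc, hF, one_mul, neg_sub]
    rw [mul_assoc a F F, hF, mul_one]
  -- F anticommutes with lists of commutators
  have hanti : ∀ l : List A, (∀ y ∈ l, F * y = -(y * F)) →
      F * l.prod = (-1 : ℂ) ^ l.length • (l.prod * F) := by
    intro l
    induction l with
    | nil => simp
    | cons y t ih =>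
      intro h
      have hy := h y List.mem_cons_self
      have ht := ih (fun z hz => h z (List.mem_cons_of_mem y hz))
      simp only [List.prod_cons, List.length_cons]
      rw [← mul_assoc, hy, neg_mul, mul_assoc, ht, mul_smul_comm, pow_succ]
      rw [mul_comm ((-1 : ℂ) ^ t.length) (-1 : ℂ), neg_one_mul, neg_smul, mul_assoc]
  -- split the product: last commutator to the right
  have hsplit : (List.ofFn fun i : Fin (n + 1) => c (x i)).prod =
      (List.ofFn fun i : Fin n => c (x i.castSucc)).prod * c (x (Fin.last n)) := by
    rw [List.ofFn_succ']
    simp [List.concat_eq_append]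
  have hσc : σ (c (x (Fin.last n))) = c (σ (x (Fin.last n))) := by
    simp [hc, map_sub, map_mul, hσF]
  -- the key cyclic step
  set L : List A := List.ofFn fun i : Fin n => c (x i.castSucc) with hL
  have hmemL : ∀ y ∈ L, F * y = -(y * F) := by
    intro y hy
    rw [hL, List.mem_ofFn] at hy
    obtain ⟨i, rfl⟩ := hy
    exact hac _
  set Q : A := c (σ (x (Fin.last n))) * L.prod with hQ
  have hQlist : Q = (c (σ (x (Fin.last n))) :: L).prod := by simp [hQ]
  have hFQ : F * Q = (-1 : ℂ) ^ (n + 1) • (Q * F) := by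
    rw [hQlist, hanti (c (σ (x (Fin.last n))) :: L) ?_]
    · simp [hL]
    · intro y hy
      rcases List.mem_cons.mp hy with h | h
      · subst h; exact hac _
      · exact hmemL y h
  have htrace : φ (Q * F) = φ (F * Q) := by rw [hφ, hσF]
  have hself : φ (F * Q) = (-1 : ℂ) ^ (n + 1) * φ (F * Q) := by
    calc φ (F * Q) = φ ((-1 : ℂ) ^ (n + 1) • (Q * F)) := by rw [hFQ]
    _ = (-1 : ℂ) ^ (n + 1) * φ (Q * F) := by rw [map_smul]; rfl
    _ = (-1 : ℂ) ^ (n + 1) * φ (F * Q) := by rw [htrace]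
  -- left side equals -φ(F * Q)
  have hleft : φ (F * (List.ofFn fun i : Fin (n + 1) => c (x i)).prod) = -φ (F * Q) := by
    rw [hsplit, ← mul_assoc, hφ, hσc, ← mul_assoc]
    have h' : c (σ (x (Fin.last n))) * F = -(F * c (σ (x (Fin.last n)))) := by
      rw [hac, neg_neg]
    rw [h', neg_mul, mul_assoc, map_neg, hQ]
  have hsign : -φ (F * Q) = (-1 : ℂ) ^ n * φ (F * Q) := by
    calc -φ (F * Q) = -((-1 : ℂ) ^ (n + 1) * φ (F * Q)) := by rw [← hself]
    _ = (-1 : ℂ) ^ n * φ (F * Q) := by rw [pow_succ]; ring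
  rw [show (List.ofFn fun i : Fin (n + 1) => F * x i - x i * F) =
      (List.ofFn fun i : Fin (n + 1) => c (x i)) from rfl]
  rw [hleft, hsign, hQ, hc]
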